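/- Suppose |⟨k, ω⟩ + a| ≥ γ/|k|^τ and |ω' - ω| < ε, |a' - a| < ε. Then for γ₊ < γ and all k with 0 < |k| < K := c((γ - γ₊)/ε)^{1/(τ+1)} (with c small enough, e.g. c ≤ 1/2), one has |⟨k, ω'⟩ + a'| ≥ γ₊/|k|^τ. -/

import Mathlib

open Finset

/-- Persistence of small-divisor conditions: if `|⟨k,ω⟩ + a| ≥ γ/|k|^τ`,
`|ω' - ω| < ε` (sup-norm), `|a' - a| < ε`, `γplus < γ`, and
`0 < |k| < K = c((γ-γplus)/ε)^{1/(τ+1)}` with `0 < c ≤ 1/2`, then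
`|⟨k,ω'⟩ + a'| ≥ γplus/|k|^τ`. -/
theorem stmt13 (b : ℕ) (ω ω' : Fin b → ℝ) (k : Fin b → ℤ) (a a' : ℝ)
    (γ γplus ε τ c : ℝ) (hγ : 0 < γplus) (hγγ : γplus < γ) (hε : 0 < ε) (hτ : 0 < τ)
    (hc : 0 < c) (hc2 : c ≤ 1 / 2)
    (knorm : ℝ) (hknorm : knorm = ∑ i, |(k i : ℝ)|)
    (hk0 : 0 < knorm)
    (hsd : |(∑ i, (k i : ℝ) * ω i) + a| ≥ γ / knorm ^ τ)
    (hω : ∀ i, |ω' i - ω i| < ε) (ha : |a' - a| < ε)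
    (hK : knorm < c * ((γ - γplus) / ε) ^ (1 / (τ + 1))) :
    |(∑ i, (k i : ℝ) * ω' i) + a'| ≥ γplus / knorm ^ τ := by
  -- knorm ≥ 1
  have hkint : knorm = ((∑ i, |k i| : ℤ) : ℝ) := by push_cast [hknorm]; rfl
  have h1 : (1 : ℝ) ≤ knorm := by
    rw [hkint] at hk0 ⊢
    exact_mod_cast (by exact_mod_cast hk0 : (0:ℤ) < ∑ i, |k i|)
  have hkpos : (0:ℝ) < knorm ^ τ := Real.rpow_pos_of_pos hk0 τ
  -- the perturbation
  have hΔ : |((∑ i, (k i : ℝ) * ω' i) + a') - ((∑ i, (k i : ℝ) * ω i) + a)|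
      ≤ knorm * ε + ε := by
    have heq : ((∑ i, (k i : ℝ) * ω' i) + a') - ((∑ i, (k i : ℝ) * ω i) + a)
        = (∑ i, (k i : ℝ) * (ω' i - ω i)) + (a' - a) := by
      simp only [mul_sub, Finset.sum_sub_distrib]; ring
    rw [heq]
    calc |(∑ i, (k i : ℝ) * (ω' i - ω i)) + (a' - a)|
        ≤ |∑ i, (k i : ℝ) * (ω' i - ω i)| + |a' - a| := abs_add_le _ _
      _ ≤ (∑ i, |(k i : ℝ)| * ε) + ε := by
          apply add_le_add _ ha.le
          calc |∑ i, (k i : ℝ) * (ω' i - ω i)| ≤ ∑ i, |(k i : ℝ) * (ω' i - ω i)| :=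
                Finset.abs_sum_le_sum_abs _ _
              _ ≤ ∑ i, |(k i : ℝ)| * ε := by
                  apply Finset.sum_le_sum
                  intro i _
                  rw [abs_mul]
                  exact mul_le_mul_of_nonneg_left (hω i).le (abs_nonneg _)
      _ = knorm * ε + ε := by rw [hknorm, ← Finset.sum_mul]
  -- key size bound
  have hX : (0:ℝ) < (γ - γplus) / ε := div_pos (by linarith) hε
  have hkey : knorm * ε + ε ≤ (γ - γplus) / knorm ^ τ := by
    have h2 : knorm * ε + ε ≤ 2 * knorm * ε := by nlinarith
    have hpow : knorm ^ (τ + 1) ≤ (γ - γplus) / ε / 2 := by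
      have hK' : knorm < (1/2) * ((γ - γplus) / ε) ^ (1 / (τ + 1)) := by
        have : c * ((γ - γplus) / ε) ^ (1 / (τ + 1)) ≤
            (1/2) * ((γ - γplus) / ε) ^ (1 / (τ + 1)) := by
          gcongr
        linarith
      have hτ1 : (0:ℝ) < τ + 1 := by linarith
      have := Real.rpow_lt_rpow hk0.le hK' hτ1
      rw [Real.mul_rpow (by norm_num) (Real.rpow_pos_of_pos hX _).le] at this
      have hXpow : (((γ - γplus) / ε) ^ (1 / (τ + 1))) ^ (τ + 1) = (γ - γplus) / ε := by
        rw [← Real.rpow_mul hX.le, one_div_mul_cancel (by linarith : τ + 1 ≠ 0),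
          Real.rpow_one]
      have hhalf : ((1:ℝ)/2) ^ (τ + 1) ≤ (1:ℝ)/2 := by
        calc ((1:ℝ)/2) ^ (τ + 1) ≤ ((1:ℝ)/2) ^ (1:ℝ) := by
              apply Real.rpow_le_rpow_of_exponent_ge (by norm_num) (by norm_num)
              linarith
          _ = 1/2 := Real.rpow_one _
      rw [hXpow] at this
      nlinarith [hX]
    rw [le_div_iff₀ hkpos]
    have hmul : knorm ^ τ * knorm = knorm ^ (τ + 1) := by
      rw [Real.rpow_add hk0, Real.rpow_one]
    have hXe : ε * ((γ - γplus) / ε) = γ - γplus := by field_simp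
    nlinarith [hkpos.le, hε]
  -- conclude
  have htri : |(∑ i, (k i : ℝ) * ω i) + a| ≤
      |(∑ i, (k i : ℝ) * ω' i) + a'| +
      |((∑ i, (k i : ℝ) * ω' i) + a') - ((∑ i, (k i : ℝ) * ω i) + a)| := by
    have := abs_sub_abs_le_abs_sub ((∑ i, (k i : ℝ) * ω i) + a)
      ((∑ i, (k i : ℝ) * ω' i) + a')
    rw [abs_sub_comm] at this
    linarith
  have : γ / knorm ^ τ - (γ - γplus) / knorm ^ τ = γplus / knorm ^ τ := by
    field_simp
    ring
  linarith
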